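/- arXiv:0906.4397 — 5 statements merged into one kernel-verified Lean document; each statement's English description precedes it below -/
import Mathlib

section
/- Let ∇ be a symplectic self-duality of a finite abelian group L. If there exist isotropic subgroups L₁ and L₂ of L with L the internal direct product L₁ × L₂, then there is an isomorphism φ : L₁ × dual(L₁) → L carrying the standard symplectic self-duality to ∇ and mapping L₁ × 0 onto L₁. -/
/-- ℚ/ℤ, the dualizing object for finite abelian groups. -/
abbrev QZ : Type := AddCircle (1 : ℚ)

/-- If a finite abelian group `L` with symplectic self-duality `∇` is the internal
direct product of two isotropic subgroups `L₁` and `L₂`, then `(L, ∇, L₁)` is a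
standard triple: there is an isomorphism `φ : L₁ × dual L₁ → L` carrying the
standard symplectic self-duality to `∇` and mapping `L₁ × 0` onto `L₁`. -/
theorem statement4 (L : Type) [AddCommGroup L] [Fintype L]
    (nabla : L ≃+ (L →+ QZ)) (hsymp : ∀ x : L, nabla x x = 0)
    (L₁ L₂ : AddSubgroup L)
    (h₁ : ∀ x ∈ L₁, ∀ y ∈ L₁, nabla x y = 0)
    (h₂ : ∀ x ∈ L₂, ∀ y ∈ L₂, nabla x y = 0)
    (hcompl : IsCompl L₁ L₂) :
    ∃ φ : (L₁ × (L₁ →+ QZ)) ≃+ L,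
      (∀ a b : L₁ × (L₁ →+ QZ), nabla (φ a) (φ b) = a.2 b.1 - b.2 a.1) ∧
      AddSubgroup.map φ.toAddMonoidHom
        ((⊤ : AddSubgroup L₁).prod (⊥ : AddSubgroup (L₁ →+ QZ))) = L₁ := by
  -- antisymmetry
  have hanti : ∀ x y : L, nabla x y = - nabla y x := by
    intro x y
    have h := hsymp (x + y)
    simp only [map_add, AddMonoidHom.add_apply, hsymp] at h
    have h' : nabla x y + nabla y x = 0 := by
      rw [add_comm]; simpa using h
    exact eq_neg_of_add_eq_zero_left h'
  have hsup : L₁ ⊔ L₂ = ⊤ := hcompl.sup_eq_top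
  -- the pairing map ψ : L₂ →+ dual L₁
  let ψ : L₂ →+ (L₁ →+ QZ) :=
    { toFun := fun y => (nabla ↑y).comp L₁.subtype
      map_zero' := by ext x; simp
      map_add' := by intro a b; ext x; simp }
  have hψinj : Function.Injective ψ := by
    rw [injective_iff_map_eq_zero]
    intro y hy
    have hz : nabla (↑y) = 0 := by
      ext z
      have hzmem : z ∈ L₁ ⊔ L₂ := by rw [hsup]; trivial
      rcases (AddSubgroup.mem_sup).1 hzmem with ⟨a, ha, b, hb, rfl⟩
      have h1 : nabla (↑y) a = 0 := by
        have := congrArg (fun f => f (⟨a, ha⟩ : L₁)) hy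
        simpa [ψ] using this
      simp [map_add, h1, h₂ _ y.2 _ hb]
    have : (y : L) = 0 := by
      apply nabla.injective; simpa using hz
    exact Subtype.ext this
  have hψsurj : Function.Surjective ψ := by
    intro χ
    -- extend χ to all of L using divisibility of QZ
    obtain ⟨χ', hχ'⟩ := CharacterModule.dual_surjective_of_injective
      (R := ℤ) (L₁.subtype.toIntLinearMap) Subtype.val_injective χ
    set z := nabla.symm χ' with hz
    have hzmem : z ∈ L₁ ⊔ L₂ := by rw [hsup]; trivial
    rcases (AddSubgroup.mem_sup).1 hzmem with ⟨a, ha, b, hb, hab⟩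
    refine ⟨⟨b, hb⟩, ?_⟩
    ext x
    have hx : nabla z (x : L) = χ x := by
      have := congrArg (fun f => f x) hχ'
      simp only [hz, AddEquiv.apply_symm_apply]
      exact (DFunLike.congr_fun (nabla.apply_symm_apply χ') (x : L)).trans this
    have hax : nabla a (x : L) = 0 := h₁ a ha x x.2
    have : nabla b (x : L) = χ x := by
      have hb' : (b : L) = z - a := by rw [← hab]; abel
      rw [hb', map_sub]
      simp [AddMonoidHom.sub_apply, hx, hax]
    simpa [ψ] using this
  let ψe : L₂ ≃+ (L₁ →+ QZ) := AddEquiv.ofBijective ψ ⟨hψinj, hψsurj⟩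
  -- the isomorphism φ
  let f : (L₁ × (L₁ →+ QZ)) →+ L :=
    AddMonoidHom.coprod L₁.subtype (L₂.subtype.comp ψe.symm.toAddMonoidHom)
  have hf : ∀ p : L₁ × (L₁ →+ QZ), f p = ↑p.1 + ↑(ψe.symm p.2) := fun p => rfl
  have hfinj : Function.Injective f := by
    rw [injective_iff_map_eq_zero]
    rintro ⟨x, χ⟩ hp
    have hx : (x : L) = -(↑(ψe.symm χ) : L) := by
      have := hf (x, χ)
      rw [hp] at this
      exact eq_neg_of_add_eq_zero_left this.symm
    have hxmem : (x : L) ∈ L₂ := by rw [hx]; exact neg_mem (ψe.symm χ).2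
    have hx0 : (x : L) = 0 := by
      have := hcompl.disjoint
      have h := (AddSubgroup.disjoint_def.1 this) x.2 hxmem
      exact h
    have hχ0 : ψe.symm χ = 0 := by
      apply Subtype.ext
      have : (↑(ψe.symm χ) : L) = 0 := by
        rw [hx0] at hx; simpa using hx.symm
      simpa using this
    have : χ = 0 := by
      have := congrArg ψe hχ0
      simpa using this
    simp [Prod.ext_iff, Subtype.ext_iff, hx0, this]
  have hfsurj : Function.Surjective f := by
    intro z
    have hzmem : z ∈ L₁ ⊔ L₂ := by rw [hsup]; trivial
    rcases (AddSubgroup.mem_sup).1 hzmem with ⟨a, ha, b, hb, hab⟩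
    refine ⟨(⟨a, ha⟩, ψe ⟨b, hb⟩), ?_⟩
    rw [hf]
    simp [hab]
  let φ : (L₁ × (L₁ →+ QZ)) ≃+ L := AddEquiv.ofBijective f ⟨hfinj, hfsurj⟩
  have hφ : ∀ p : L₁ × (L₁ →+ QZ), φ p = ↑p.1 + ↑(ψe.symm p.2) := fun p => rfl
  refine ⟨φ, ?_, ?_⟩
  · rintro ⟨a₁, a₂⟩ ⟨b₁, b₂⟩
    rw [hφ, hφ]
    simp only [map_add, AddMonoidHom.add_apply]
    have t1 : nabla (↑a₁) (↑b₁ : L) = 0 := h₁ _ a₁.2 _ b₁.2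
    have t2 : nabla (↑(ψe.symm a₂) : L) (↑(ψe.symm b₂) : L) = 0 :=
      h₂ _ (ψe.symm a₂).2 _ (ψe.symm b₂).2
    have t3 : nabla (↑(ψe.symm a₂) : L) (↑b₁ : L) = a₂ b₁ := by
      have : ψ (ψe.symm a₂) = a₂ := ψe.apply_symm_apply a₂
      have := congrArg (fun g => g b₁) this
      simpa [ψ] using this
    have t4 : nabla (↑a₁ : L) (↑(ψe.symm b₂) : L) = - b₂ a₁ := by
      rw [hanti]
      congr 1
      have : ψ (ψe.symm b₂) = b₂ := ψe.apply_symm_apply b₂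
      have := congrArg (fun g => g a₁) this
      simpa [ψ] using this
    rw [t1, t2, t3, t4]
    abel
  · ext z
    simp only [AddSubgroup.mem_map, AddSubgroup.mem_prod, AddSubgroup.mem_top,
      AddSubgroup.mem_bot, true_and]
    constructor
    · rintro ⟨⟨x, χ⟩, hχ, rfl⟩
      simp only at hχ
      subst hχ
      have : φ.toAddMonoidHom (x, 0) = (x : L) := by
        show φ (x, 0) = (x : L)
        rw [hφ]; simp
      rw [this]; exact x.2
    · intro hz
      refine ⟨(⟨z, hz⟩, 0), rfl, ?_⟩
      show φ (⟨z, hz⟩, 0) = z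
      rw [hφ]; simp
end

section
/- Let ∇ be a symplectic self-duality of a finite abelian group L of odd order. Let L₁ be a maximal isotropic subgroup of L that admits a complement L₂ (so L = L₁ × L₂ internally). Then L₁ admits an isotropic complement: there is a subgroup L₂' with L = L₁ × L₂' and L₂' isotropic. -/
/-- The annihilator of a subgroup `H` of `G` inside the character group of `G`. -/
def perp {G : Type*} [AddCommGroup G] (H : AddSubgroup G) : AddSubgroup (G →+ QZ) where
  carrier := {χ : G →+ QZ | ∀ g ∈ H, χ g = 0}
  zero_mem' := by intro g _; simp
  add_mem' := by intro a b ha hb g hg; simp [ha g hg, hb g hg]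
  neg_mem' := by intro a ha g hg; simp [ha g hg]

/-- Let `∇` be a symplectic self-duality of a finite abelian group `L` of odd order.
If a maximal isotropic subgroup `L₁` admits a complement `L₂`, then `L₁` admits an
isotropic complement. -/
theorem statement5 (L : Type) [AddCommGroup L] [Fintype L]
    (hodd : Odd (Nat.card L))
    (nabla : L ≃+ (L →+ QZ)) (hsymp : ∀ x : L, nabla x x = 0)
    (L₁ L₂ : AddSubgroup L)
    (hmax : AddSubgroup.comap nabla.toAddMonoidHom (perp L₁) = L₁)
    (hcompl : IsCompl L₁ L₂) :
    ∃ L₂' : AddSubgroup L, IsCompl L₁ L₂' ∧ ∀ x ∈ L₂', ∀ y ∈ L₂', nabla x y = 0 := by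
  classical
  obtain ⟨m, hm⟩ := hodd
  -- L₁ is isotropic
  have hiso : ∀ x ∈ L₁, ∀ y ∈ L₁, nabla x y = 0 := by
    intro x hx y hy
    have hx' : x ∈ AddSubgroup.comap nabla.toAddMonoidHom (perp L₁) := by
      rw [hmax]; exact hx
    exact hx' y hy
  -- antisymmetry
  have hanti : ∀ x y : L, nabla x y = - nabla y x := by
    intro x y
    have h := hsymp (x + y)
    simp only [map_add, AddMonoidHom.add_apply, hsymp] at h
    rw [zero_add, add_zero, add_comm] at h
    exact eq_neg_of_add_eq_zero_left h
  -- order kills pairing values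
  have hcard : ∀ x y : L, (Nat.card L : ℤ) • nabla x y = 0 := by
    intro x y
    have hy : (Nat.card L : ℤ) • y = 0 := by
      have : Nat.card L • y = 0 := card_nsmul_eq_zero'
      exact_mod_cast this
    rw [← map_zsmul (nabla x), hy, map_zero]
  -- projection onto L₂ along L₁
  have hc : IsCompl (AddSubgroup.toIntSubmodule L₂) (AddSubgroup.toIntSubmodule L₁) :=
    AddSubgroup.toIntSubmodule.isCompl hcompl.symm
  set proj := Submodule.projectionOnto _ _ hc with hproj
  set π₂ : L →+ L :=
    ((AddSubgroup.toIntSubmodule L₂).subtype.comp proj).toAddMonoidHom with hπ₂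
  have hπ₂L₂ : ∀ y ∈ L₂, π₂ y = y := by
    intro y hy
    have := Submodule.projectionOnto_apply_left hc ⟨y, hy⟩
    simp [hπ₂, hproj, this]
  have hπ₂L₁ : ∀ x ∈ L₁, π₂ x = 0 := by
    intro x hx
    have := Submodule.projectionOnto_apply_of_mem_right hc hx
    simp [hπ₂, hproj, this]
  obtain ⟨k, hk⟩ : ∃ k : ℤ, k = (m : ℤ) + 1 := ⟨_, rfl⟩
  -- the correcting map F : L →+ L with image in L₁
  set F : L →+ L := AddMonoidHom.mk' (fun z => nabla.symm ((-k) • ((nabla z).comp π₂)))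
    (by
      intro a b
      show nabla.symm ((-k) • ((nabla (a + b)).comp π₂))
          = nabla.symm ((-k) • ((nabla a).comp π₂)) + nabla.symm ((-k) • ((nabla b).comp π₂))
      rw [map_add, AddMonoidHom.add_comp, smul_add, map_add]) with hF
  have hFval : ∀ z w : L, nabla (F z) w = (-k) • nabla z (π₂ w) := by
    intro z w
    simp [hF, AddEquiv.apply_symm_apply]
  have hFmem : ∀ z : L, F z ∈ L₁ := by
    intro z
    rw [← hmax]
    intro g hg
    rw [AddEquiv.coe_toAddMonoidHom, hFval z g, hπ₂L₁ g hg, map_zero, smul_zero]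
  -- the new complement
  refine ⟨L₂.map (F + AddMonoidHom.id L), ⟨?_, ?_⟩, ?_⟩
  · -- disjoint
    rw [disjoint_iff, AddSubgroup.eq_bot_iff_forall]
    intro x hx
    obtain ⟨hx₁, y, hy, hxy⟩ := AddSubgroup.mem_inf.mp hx
    simp only [AddMonoidHom.add_apply, AddMonoidHom.id_apply] at hxy
    have hyL₁ : y ∈ L₁ := by
      have : y = x - F y := by rw [← hxy]; abel
      rw [this]; exact sub_mem hx₁ (hFmem y)
    have hy0 : y = 0 := by
      have := hcompl.disjoint.le_bot (AddSubgroup.mem_inf.mpr ⟨hyL₁, hy⟩)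
      exact_mod_cast this
    rw [← hxy, hy0, map_zero, zero_add]
  · -- codisjoint
    rw [codisjoint_iff, eq_top_iff]
    intro z _
    have hz : z ∈ L₁ ⊔ L₂ := by rw [hcompl.codisjoint.eq_top]; trivial
    obtain ⟨a, ha, b, hb, hab⟩ := AddSubgroup.mem_sup.mp hz
    have : z = (a - F b) + (F b + b) := by rw [← hab]; abel
    rw [this]
    exact AddSubgroup.add_mem_sup (sub_mem ha (hFmem b))
      ⟨b, hb, by simp [AddMonoidHom.add_apply]⟩
  · -- isotropy
    rintro x ⟨y, hy, rfl⟩ x' ⟨y', hy', rfl⟩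
    simp only [AddMonoidHom.add_apply, AddMonoidHom.id_apply]
    have e1 : nabla (F y) (F y') = 0 := by
      rw [hFval, hπ₂L₁ _ (hFmem y'), map_zero, smul_zero]
    have e2 : nabla (F y) y' = (-k) • nabla y y' := by
      rw [hFval, hπ₂L₂ _ hy']
    have e3 : nabla y (F y') = (-k) • nabla y y' := by
      rw [hanti y (F y'), hFval, hπ₂L₂ _ hy, hanti y' y]
      simp
    have e4 : (1 - 2 * k) • nabla y y' = 0 := by
      have : (1 - 2 * k) = -(Nat.card L : ℤ) := by
        rw [hk]; push_cast [hm]; ring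
      rw [this, neg_smul, hcard, neg_zero]
    have expand : nabla (F y + y) (F y' + y')
        = nabla (F y) (F y') + nabla (F y) y' + nabla y (F y') + nabla y y' := by
      simp only [map_add, AddMonoidHom.add_apply]
      abel
    rw [expand, e1, e2, e3, zero_add]
    have : (1 - 2 * k) • nabla y y'
        = (-k) • nabla y y' + (-k) • nabla y y' + nabla y y' := by
      module
    rw [← this, e4]
end

section
/- Let ∇ be a symplectic self-duality of a finite abelian group L, and let A be an isotropic direct summand of L, say L = A × B. Then L decomposes as an internal direct product A × C × D where: C ≅ dual(A), the subgroup A × C is orthogonal to D under ∇ (∇(x)(y)=0 for x ∈ A×C, y ∈ D), A is isotropic in A × C, and D with the restricted duality is isomorphic to the subquotient L_A = ∇⁻¹(A^⊥)/A with its induced symplectic self-duality. (Peeling lemma, finite case.) -/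
section helpers

open AddCircle

lemma qz_one_eq_zero : ((1 : ℚ) : QZ) = 0 := by
  rw [AddCircle.coe_eq_zero_iff]
  exact ⟨1, one_zsmul _⟩

lemma zmod_dual_equiv (n : ℕ) (hn : 0 < n) : Nonempty ((ZMod n →+ QZ) ≃ ZMod n) := by
  haveI : NeZero n := ⟨hn.ne'⟩
  have hn' : (n : ℚ) ≠ 0 := Nat.cast_ne_zero.mpr hn.ne'
  set q : QZ := (((n : ℚ)⁻¹ : ℚ) : QZ) with hq
  have hnq : (n : ℤ) • q = 0 := by
    rw [hq, ← AddCircle.coe_zsmul, zsmul_eq_mul, Int.cast_natCast,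
      mul_inv_cancel₀ hn', qz_one_eq_zero]
  let Φ : ZMod n →+ QZ := ZMod.lift n ⟨zmultiplesHom QZ q, by simpa using hnq⟩
  have hΦint : ∀ m : ℤ, Φ ((m : ZMod n)) = (((m : ℚ) * (n : ℚ)⁻¹ : ℚ) : QZ) := by
    intro m
    have : Φ ((m : ZMod n)) = m • q := ZMod.lift_coe n _ m
    rw [this, hq, ← AddCircle.coe_zsmul, zsmul_eq_mul]
  have kerΦ : ∀ m : ℤ, Φ ((m : ZMod n)) = 0 → (m : ZMod n) = 0 := by
    intro m hm
    rw [hΦint m, AddCircle.coe_eq_zero_iff] at hm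
    obtain ⟨k, hk⟩ := hm
    rw [zsmul_eq_mul, mul_one] at hk
    have : (m : ℚ) = (k : ℚ) * (n : ℚ) := by
      field_simp at hk ⊢
      linarith [hk]
    have hm' : m = k * n := by exact_mod_cast this
    rw [hm']
    push_cast
    simp [ZMod.natCast_self]
  have tΦ : ∀ a : ZMod n, n • Φ a = 0 := by
    intro a
    rw [← map_nsmul]
    have : n • a = 0 := by
      rw [nsmul_eq_mul, ZMod.natCast_self, zero_mul]
    rw [this, map_zero]
  let w : ZMod n → {x : QZ // n • x = 0} := fun a => ⟨Φ a, tΦ a⟩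
  have winj : Function.Injective w := by
    intro a b hab
    obtain ⟨m, hm⟩ := ZMod.intCast_surjective (n := n) (a - b)
    have : Φ (a - b) = 0 := by
      have := congrArg Subtype.val hab
      simp only [w] at this
      rw [map_sub, this, sub_self]
    rw [← hm] at this
    have h0 : (m : ZMod n) = 0 := kerΦ m this
    have : a - b = 0 := by rw [← hm, h0]
    exact sub_eq_zero.mp this
  have wsurj : Function.Surjective w := by
    rintro ⟨x, hx⟩
    obtain ⟨r, rfl⟩ : ∃ r : ℚ, (r : QZ) = x := QuotientAddGroup.mk_surjective x
    rw [← AddCircle.coe_nsmul, AddCircle.coe_eq_zero_iff] at hx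
    obtain ⟨k, hk⟩ := hx
    rw [zsmul_eq_mul, mul_one, nsmul_eq_mul] at hk
    have hr : r = (k : ℚ) * (n : ℚ)⁻¹ := by
      field_simp
      linarith [hk]
    refine ⟨(k : ZMod n), Subtype.ext ?_⟩
    show Φ ((k : ZMod n)) = (r : QZ)
    rw [hΦint k, hr]
  let v : (ZMod n →+ QZ) → {x : QZ // n • x = 0} := fun φ =>
    ⟨φ 1, by
      rw [← map_nsmul]
      have : n • (1 : ZMod n) = 0 := by rw [nsmul_eq_mul, mul_one, ZMod.natCast_self]
      rw [this, map_zero]⟩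
  have vinj : Function.Injective v := by
    intro φ ψ h
    have h1 : φ 1 = ψ 1 := congrArg Subtype.val h
    ext a
    have ha : a = a.val • (1 : ZMod n) := by
      rw [nsmul_eq_mul, mul_one, ZMod.natCast_rightInverse a]
    rw [ha, map_nsmul, map_nsmul, h1]
  let u : ZMod n → (ZMod n →+ QZ) := fun a => Φ.comp (AddMonoidHom.mulLeft a)
  have hvu : ∀ a, v (u a) = w a := by
    intro a
    apply Subtype.ext
    show Φ (a * 1) = Φ a
    rw [mul_one]
  have uinj : Function.Injective u := by
    intro a b h
    apply winj
    rw [← hvu, ← hvu, h]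
  have usurj : Function.Surjective u := by
    intro φ
    obtain ⟨a, ha⟩ := wsurj (v φ)
    exact ⟨a, vinj (by rw [hvu, ha])⟩
  exact ⟨(Equiv.ofBijective u ⟨uinj, usurj⟩).symm⟩

end helpers

open scoped DirectSum in
lemma dual_equiv (G : Type*) [AddCommGroup G] [Finite G] : Nonempty ((G →+ QZ) ≃ G) := by
  classical
  obtain ⟨ι, hι, n, hlt, ⟨e⟩⟩ := AddCommGroup.equiv_directSum_zmod_of_finite' G
  let E1 : (G →+ QZ) ≃ ((⨁ i, ZMod (n i)) →+ QZ) :=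
  { toFun := fun χ => χ.comp e.symm.toAddMonoidHom
    invFun := fun χ => χ.comp e.toAddMonoidHom
    left_inv := fun χ => by ext x; simp
    right_inv := fun χ => by ext x; simp }
  let E2 : ((⨁ i, ZMod (n i)) →+ QZ) ≃ (∀ i, ZMod (n i) →+ QZ) :=
  { toFun := fun χ i => χ.comp (DirectSum.of (fun i => ZMod (n i)) i)
    invFun := fun φ => DirectSum.toAddMonoid φ
    left_inv := fun χ => by
      refine DirectSum.addHom_ext fun i x => ?_
      simp [DirectSum.toAddMonoid_of]
    right_inv := fun φ => by
      funext i; ext x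
      simp [DirectSum.toAddMonoid_of] }
  let E3 : (∀ i, ZMod (n i) →+ QZ) ≃ (∀ i, ZMod (n i)) :=
    Equiv.piCongrRight fun i => (zmod_dual_equiv (n i) (Nat.lt_of_lt_of_le Nat.zero_lt_one (hlt i).le)).some
  let E4 : (∀ i, ZMod (n i)) ≃ (⨁ i, ZMod (n i)) := DFinsupp.equivFunOnFintype.symm
  exact ⟨E1.trans (E2.trans (E3.trans (E4.trans e.symm.toEquiv)))⟩


section aux

-- char extension
lemma ext_char {L : Type*} [AddCommGroup L] (S : AddSubgroup L) (ψ : ↥S →+ QZ) :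
    ∃ χ : L →+ QZ, ∀ s : ↥S, χ s = ψ s := by
  obtain ⟨χ, hχ⟩ := CharacterModule.dual_surjective_of_injective (R := ℤ)
    S.subtype.toIntLinearMap Subtype.coe_injective ψ
  exact ⟨χ, fun s => DFunLike.congr_fun hχ s⟩

lemma sep_char {L : Type*} [AddCommGroup L] (S : AddSubgroup L) (a : ↥S)
    (h : ∀ χ : ↥S →+ QZ, χ a = 0) : a = 0 :=
  CharacterModule.eq_zero_of_character_apply (fun c => h c)

end aux

/-- Peeling lemma (finite case).  If `A` is an isotropic direct summand of a finite
abelian group `L` with symplectic self-duality `∇`, then `L = A × C × D` internally,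
where `C ≅ dual A`, `A × C` is orthogonal to `D`, and `D` with the restricted duality
is isomorphic to the subquotient `L_A = ∇⁻¹(A^⊥)/A` with its induced symplectic
self-duality. -/
theorem statement8 (L : Type) [AddCommGroup L] [Fintype L]
    (nabla : L ≃+ (L →+ QZ)) (hsymp : ∀ x : L, nabla x x = 0)
    (A B : AddSubgroup L) (hcompl : IsCompl A B)
    (hiso : ∀ x ∈ A, ∀ y ∈ A, nabla x y = 0) :
    ∃ C D : AddSubgroup L,
      A ⊓ C = ⊥ ∧ (A ⊔ C) ⊓ D = ⊥ ∧ A ⊔ C ⊔ D = ⊤ ∧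
      Nonempty (C ≃+ (A →+ QZ)) ∧
      (∀ x ∈ A ⊔ C, ∀ y ∈ D, nabla x y = 0) ∧
      ∃ ψ : D ≃+ (AddSubgroup.comap nabla.toAddMonoidHom (perp A) ⧸
        A.addSubgroupOf (AddSubgroup.comap nabla.toAddMonoidHom (perp A))),
        ∀ (x y : D) (x' y' : AddSubgroup.comap nabla.toAddMonoidHom (perp A)),
          (QuotientAddGroup.mk x' : AddSubgroup.comap nabla.toAddMonoidHom (perp A) ⧸
            A.addSubgroupOf (AddSubgroup.comap nabla.toAddMonoidHom (perp A))) = ψ x →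
          (QuotientAddGroup.mk y' : AddSubgroup.comap nabla.toAddMonoidHom (perp A) ⧸
            A.addSubgroupOf (AddSubgroup.comap nabla.toAddMonoidHom (perp A))) = ψ y →
          nabla (x' : L) (y' : L) = nabla (x : L) (y : L) := by
  classical
  -- antisymmetry
  have antis : ∀ x y : L, nabla x y = - nabla y x := by
    intro x y
    have h : nabla y x + nabla x y = 0 := by
      have h2 := hsymp (x + y)
      rw [map_add] at h2
      simp only [AddMonoidHom.add_apply, map_add, hsymp x, hsymp y,
        zero_add, add_zero] at h2
      exact h2
    exact eq_neg_of_add_eq_zero_right h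
  -- injectivity of nabla
  have ninj : ∀ x : L, nabla x = 0 → x = 0 := by
    intro x hx
    apply nabla.injective
    rw [hx, map_zero]
  -- projection onto A along B
  have hc' : IsCompl (AddSubgroup.toIntSubmodule A) (AddSubgroup.toIntSubmodule B) :=
    AddSubgroup.toIntSubmodule.isCompl hcompl
  set π : L →ₗ[ℤ] (AddSubgroup.toIntSubmodule A) :=
    Submodule.projectionOnto _ _ hc' with hπ
  set p : L →+ L := ((AddSubgroup.toIntSubmodule A).subtype.comp π).toAddMonoidHom with hp
  have hpA : ∀ x : L, p x ∈ A := fun x => (π x).2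
  have hpa : ∀ a (_ : a ∈ A), p a = a := by
    intro a ha
    have h := Submodule.projectionOnto_apply_left hc' (⟨a, ha⟩ : AddSubgroup.toIntSubmodule A)
    show ((π a : AddSubgroup.toIntSubmodule A) : L) = a
    rw [h]
  have hpb : ∀ b (_ : b ∈ B), p b = 0 := by
    intro b hb
    have h := Submodule.projectionOnto_apply_of_mem_right hc' hb
    show ((π b : AddSubgroup.toIntSubmodule A) : L) = 0
    rw [h]; rfl
  -- restriction homs
  let res : ∀ S : AddSubgroup L, L →+ (↥S →+ QZ) := fun S =>
    { toFun := fun x => (nabla x).comp S.subtype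
      map_zero' := by ext s; simp
      map_add' := by intro x y; ext s; simp }
  have res_apply : ∀ (S : AddSubgroup L) (x : L) (s : ↥S), res S x s = nabla x s :=
    fun S x s => rfl
  -- the subgroup C
  set C : AddSubgroup L := AddSubgroup.comap nabla.toAddMonoidHom (perp B) with hC
  have memC : ∀ c : L, c ∈ C ↔ ∀ g ∈ B, nabla c g = 0 := fun c => Iff.rfl
  -- F := res A is surjective from C
  have surjF : ∀ ψ : ↥A →+ QZ, ∃ c ∈ C, res A c = ψ := by
    intro ψ
    let pA : L →+ ↥A := p.codRestrict A hpA
    let χ : L →+ QZ := ψ.comp pA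
    refine ⟨nabla.symm χ, ?_, ?_⟩
    · rw [memC]
      intro g hg
      show nabla (nabla.symm χ) g = 0
      rw [nabla.apply_symm_apply]
      show ψ (pA g) = 0
      have : pA g = 0 := by
        apply Subtype.ext
        show p g = 0
        exact hpb g hg
      rw [this, map_zero]
    · ext a
      rw [res_apply, nabla.apply_symm_apply]
      show ψ (pA (a : L)) = ψ a
      congr 1
      apply Subtype.ext
      show p (a : L) = (a : L)
      exact hpa _ a.2
  -- F is injective on C
  have injF : ∀ c ∈ C, res A c = 0 → c = 0 := by
    intro c hc h0
    apply ninj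
    have hker : (⊤ : AddSubgroup L) ≤ (nabla c).ker := by
      rw [← hcompl.sup_eq_top]
      apply sup_le
      · intro a ha
        rw [AddMonoidHom.mem_ker]
        have := DFunLike.congr_fun h0 (⟨a, ha⟩ : ↥A)
        rw [res_apply] at this
        exact this
      · intro b hb
        rw [AddMonoidHom.mem_ker]
        exact (memC c).mp hc b hb
    ext x
    have := hker (AddSubgroup.mem_top x)
    rw [AddMonoidHom.mem_ker] at this
    rw [this]; rfl
  -- A ⊓ C = ⊥
  have hAC : A ⊓ C = ⊥ := by
    rw [eq_bot_iff]
    intro x hx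
    rw [AddSubgroup.mem_bot]
    apply injF x hx.2
    ext a
    rw [res_apply]
    exact hiso x hx.1 a a.2
  set N : AddSubgroup L := A ⊔ C with hN
  -- nondegeneracy of N
  have nondeg : ∀ x ∈ N, (∀ n ∈ N, nabla x n = 0) → x = 0 := by
    intro x hx hxn
    rw [hN, AddSubgroup.mem_sup] at hx
    obtain ⟨a, ha, c, hc, hac⟩ := hx
    have hfc : res A c = 0 := by
      ext a'
      rw [res_apply]
      have h1 : nabla x a' = 0 := hxn a' (AddSubgroup.mem_sup_left a'.2)
      have : nabla x = nabla a + nabla c := by rw [← hac, map_add]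
      have h2 := DFunLike.congr_fun this (a' : L)
      rw [AddMonoidHom.add_apply] at h2
      have h3 : nabla a a' = 0 := hiso a ha a' a'.2
      rw [h1, h3, zero_add] at h2
      exact h2.symm
    have hc0 : c = 0 := injF c hc hfc
    have hxa : x = a := by rw [← hac, hc0, add_zero]
    have ha0 : (⟨a, ha⟩ : ↥A) = 0 := by
      apply sep_char A
      intro χ
      obtain ⟨c', hc', hfc'⟩ := surjF χ
      have h1 : nabla x c' = 0 := hxn c' (AddSubgroup.mem_sup_right hc')
      have h2 : nabla c' x = 0 := by rw [antis, h1, neg_zero]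
      have := DFunLike.congr_fun hfc' (⟨a, ha⟩ : ↥A)
      rw [res_apply] at this
      rw [← this]
      show nabla c' a = 0
      rw [← hxa]
      exact h2
    have : a = 0 := congrArg Subtype.val ha0
    rw [hxa, this]
  -- the subgroup D
  set D : AddSubgroup L := AddSubgroup.comap nabla.toAddMonoidHom (perp N) with hD
  have memD : ∀ y : L, y ∈ D ↔ ∀ n ∈ N, nabla y n = 0 := fun y => Iff.rfl
  -- orthogonality
  have orth : ∀ x ∈ N, ∀ y ∈ D, nabla x y = 0 := by
    intro x hx y hy
    rw [antis, (memD y).mp hy x hx, neg_zero]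
  -- N ⊓ D = ⊥
  have hND : N ⊓ D = ⊥ := by
    rw [eq_bot_iff]
    intro x hx
    rw [AddSubgroup.mem_bot]
    exact nondeg x hx.1 (fun n hn => (memD x).mp hx.2 n hn)
  -- duality for N
  obtain ⟨eN⟩ := dual_equiv ↥N
  haveI : Finite (↥N →+ QZ) := Finite.of_equiv _ eN.symm
  -- G := res N is surjective
  have surjG : ∀ ξ : ↥N →+ QZ, ∃ x : L, res N x = ξ := by
    intro ξ
    obtain ⟨χ, hχ⟩ := ext_char N ξ
    refine ⟨nabla.symm χ, ?_⟩
    ext n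
    rw [res_apply, nabla.apply_symm_apply]
    exact hχ n
  -- GN bijective
  let GN : ↥N →+ (↥N →+ QZ) := (res N).comp N.subtype
  have GNinj : Function.Injective GN := by
    rw [injective_iff_map_eq_zero]
    intro n hn
    apply Subtype.ext
    apply nondeg n n.2
    intro k hk
    have := DFunLike.congr_fun hn (⟨k, hk⟩ : ↥N)
    exact this
  have GNbij : Function.Bijective GN := by
    rw [Nat.bijective_iff_injective_and_card]
    exact ⟨GNinj, (Nat.card_congr eN).symm⟩
  -- N ⊔ D = ⊤
  have hsup : N ⊔ D = ⊤ := by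
    rw [eq_top_iff]
    intro y _
    obtain ⟨n, hn⟩ := GNbij.2 (res N y)
    have hd : y - (n : L) ∈ D := by
      rw [memD]
      intro k hk
      have h1 : nabla y k = nabla (n : L) k := by
        have := DFunLike.congr_fun hn (⟨k, hk⟩ : ↥N)
        rw [res_apply] at this
        exact this.symm
      rw [map_sub, AddMonoidHom.sub_apply, h1, sub_self]
    rw [AddSubgroup.mem_sup]
    exact ⟨n, n.2, y - n, hd, by abel⟩
  -- C ≃+ dual A
  let Chom : ↥C →+ (↥A →+ QZ) := (res A).comp C.subtype
  have Cbij : Function.Bijective Chom := by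
    constructor
    · rw [injective_iff_map_eq_zero]
      intro c hc
      exact Subtype.ext (injF c c.2 hc)
    · intro ψ
      obtain ⟨c, hc, hfc⟩ := surjF ψ
      exact ⟨⟨c, hc⟩, hfc⟩
  -- the subquotient
  set M : AddSubgroup L := AddSubgroup.comap nabla.toAddMonoidHom (perp A) with hM
  have memM : ∀ y : L, y ∈ M ↔ ∀ a ∈ A, nabla y a = 0 := fun y => Iff.rfl
  have hAN : A ≤ N := le_sup_left
  have hDM : D ≤ M := by
    intro y hy
    rw [memM]
    intro a ha
    exact (memD y).mp hy a (hAN ha)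
  let φ : ↥D →+ (↥M ⧸ A.addSubgroupOf M) :=
    (QuotientAddGroup.mk' (A.addSubgroupOf M)).comp (AddSubgroup.inclusion hDM)
  have φbij : Function.Bijective φ := by
    constructor
    · rw [injective_iff_map_eq_zero]
      intro d hd
      have : AddSubgroup.inclusion hDM d ∈ A.addSubgroupOf M :=
        (QuotientAddGroup.eq_zero_iff _).mp hd
      rw [AddSubgroup.mem_addSubgroupOf] at this
      have hdA : (d : L) ∈ A := this
      apply Subtype.ext
      have : (d : L) ∈ N ⊓ D := ⟨hAN hdA, d.2⟩
      rw [hND, AddSubgroup.mem_bot] at this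
      exact this
    · intro Q
      obtain ⟨m, rfl⟩ := QuotientAddGroup.mk_surjective Q
      have hm : (m : L) ∈ N ⊔ D := by rw [hsup]; exact AddSubgroup.mem_top _
      rw [AddSubgroup.mem_sup] at hm
      obtain ⟨n, hn, d, hd, hnd⟩ := hm
      rw [AddSubgroup.mem_sup] at hn
      obtain ⟨a, ha, c, hc, hacn⟩ := hn
      -- show c = 0
      have hFm : res A (m : L) = 0 := by
        ext a'
        rw [res_apply]
        exact (memM m).mp m.2 a' a'.2
      have hFd : res A d = 0 := by
        ext a'
        rw [res_apply]
        exact (memM d).mp (hDM hd) a' a'.2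
      have hFa : res A a = 0 := by
        ext a'
        rw [res_apply]
        exact hiso a ha a' a'.2
      have hFc : res A c = 0 := by
        have : res A (m : L) = res A a + res A c + res A d := by
          rw [← map_add, ← map_add, hacn, hnd]
        rw [hFm, hFa, hFd, zero_add, add_zero] at this
        exact this.symm
      have hc0 : c = 0 := injF c hc hFc
      have hnA : a + c = a := by rw [hc0, add_zero]
      refine ⟨⟨d, hd⟩, ?_⟩
      show QuotientAddGroup.mk (AddSubgroup.inclusion hDM ⟨d, hd⟩) = QuotientAddGroup.mk m
      rw [QuotientAddGroup.eq_iff_sub_mem]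
      rw [AddSubgroup.mem_addSubgroupOf]
      show (d : L) - (m : L) ∈ A
      have : (d : L) - (m : L) = -a := by
        rw [← hnd, ← hacn, hc0]
        abel
      rw [this]
      exact A.neg_mem ha
  let ψ : ↥D ≃+ (↥M ⧸ A.addSubgroupOf M) := AddEquiv.ofBijective φ φbij
  refine ⟨C, D, hAC, hND, hsup, ⟨AddEquiv.ofBijective Chom Cbij⟩, orth, ψ, ?_⟩
  intro x y x' y' hx' hy'
  have hψ : ∀ z : ↥D, ψ z = QuotientAddGroup.mk (AddSubgroup.inclusion hDM z) := fun z => rfl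
  rw [hψ] at hx' hy'
  rw [QuotientAddGroup.eq_iff_sub_mem, AddSubgroup.mem_addSubgroupOf] at hx' hy'
  have hax : (x' : L) - (x : L) ∈ A := hx'
  have hay : (y' : L) - (y : L) ∈ A := hy'
  set a : L := (x' : L) - (x : L) with haa
  set b : L := (y' : L) - (y : L) with hbb
  have hx'' : (x' : L) = (x : L) + a := by rw [haa]; abel
  have hy'' : (y' : L) = (y : L) + b := by rw [hbb]; abel
  have h1 : nabla (x : L) b = 0 := (memM (x : L)).mp (hDM x.2) b hay
  have h2 : nabla a (y : L) = 0 := orth a (hAN hax) (y : L) y.2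
  have h3 : nabla a b = 0 := hiso a hax b hay
  rw [hx'', hy'']
  simp only [map_add, AddMonoidHom.add_apply, h1, h2, h3, add_zero, zero_add]
end

section
/- Let L be a finite abelian group with a symplectic self-duality ∇. Then |L| is a perfect square, and L possesses a maximal isotropic subgroup G with |G|² = |L|. -/
lemma qz_order (n : ℕ) (hn : 0 < n) :
    addOrderOf ((((1:ℚ) / n : ℚ)) : QZ) = n := by
  haveI : Fact ((0:ℚ) < 1) := ⟨one_pos⟩
  exact AddCircle.addOrderOf_period_div hn

lemma qz_torsion {n : ℕ} (hn : 0 < n) {u : QZ} (hu : n • u = 0) :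
    ∃ k : ℤ, k • ((((1:ℚ) / n : ℚ) : QZ)) = u := by
  induction u using QuotientAddGroup.induction_on with
  | H r =>
  rw [← AddCircle.coe_nsmul, AddCircle.coe_eq_zero_iff] at hu
  obtain ⟨k, hk⟩ := hu
  refine ⟨k, ?_⟩
  rw [← AddCircle.coe_zsmul]
  congr 1
  have hn' : (n:ℚ) ≠ 0 := by exact_mod_cast hn.ne'
  rw [zsmul_eq_mul] at hk ⊢
  rw [nsmul_eq_mul] at hk
  field_simp
  linarith [hk]

lemma qz_hasEnough (n : ℕ) (hn : 0 < n) : HasEnoughRootsOfUnity (Multiplicative QZ) n := by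
  set g : QZ := (((1:ℚ) / n : ℚ) : QZ) with hg
  have horder : orderOf (Multiplicative.ofAdd g) = n := by
    rw [orderOf_ofAdd_eq_addOrderOf, qz_order n hn]
  constructor
  · exact ⟨Multiplicative.ofAdd g, horder ▸ IsPrimitiveRoot.orderOf _⟩
  · set z : (Multiplicative QZ)ˣ := toUnits (Multiplicative.ofAdd g) with hz
    have hzmem : z ∈ rootsOfUnity n (Multiplicative QZ) := by
      rw [mem_rootsOfUnity, ← map_pow]
      have : (Multiplicative.ofAdd g) ^ n = 1 := by
        rw [← horder]; exact pow_orderOf_eq_one _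
      rw [this, map_one]
    refine ⟨⟨⟨z, hzmem⟩, fun x => ?_⟩⟩
    have hx : ((x : (Multiplicative QZ)ˣ) : Multiplicative QZ) ^ n = 1 := by
      have := (mem_rootsOfUnity' n _).mp x.2
      exact this
    have htor : n • (Multiplicative.toAdd ((x : (Multiplicative QZ)ˣ) : Multiplicative QZ)) = 0 := by
      have := congrArg Multiplicative.toAdd hx
      simpa using this
    obtain ⟨k, hk⟩ := qz_torsion hn htor
    refine ⟨k, ?_⟩
    have hval : z ^ k = (x : (Multiplicative QZ)ˣ) := by
      apply Units.ext
      rw [hz, Units.val_zpow_eq_zpow_val]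
      show (Multiplicative.ofAdd g) ^ k = _
      rw [← ofAdd_zsmul, hk, ofAdd_toAdd]
    exact Subtype.ext (by simpa using hval)

lemma card_dual (A : Type*) [AddCommGroup A] [Finite A] :
    Nat.card (A →+ QZ) = Nat.card A := by
  haveI : HasEnoughRootsOfUnity (Multiplicative QZ) (Monoid.exponent (Multiplicative A)) :=
    qz_hasEnough _ (Monoid.exponent_pos.mpr (Monoid.ExponentExists.of_finite))
  obtain ⟨e⟩ := CommGroup.monoidHom_mulEquiv_of_hasEnoughRootsOfUnity
    (Multiplicative A) (Multiplicative QZ)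
  have e1 : (A →+ QZ) ≃ (Multiplicative A →* Multiplicative QZ) := AddMonoidHom.toMultiplicative
  have e2 : (Multiplicative A →* Multiplicative QZ) ≃ (Multiplicative A →* (Multiplicative QZ)ˣ) :=
    (MulEquiv.monoidHomCongrRight toUnits).toEquiv
  calc Nat.card (A →+ QZ) = Nat.card (Multiplicative A) :=
        Nat.card_congr ((e1.trans e2).trans e.toEquiv)
    _ = Nat.card A := rfl

/-- A finite abelian group `L` with a symplectic self-duality has square order, and
possesses a maximal isotropic subgroup `G` with `|G|² = |L|`. -/
theorem statement11 (L : Type) [AddCommGroup L] [Fintype L]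
    (nabla : L ≃+ (L →+ QZ)) (hsymp : ∀ x : L, nabla x x = 0) :
    IsSquare (Nat.card L) ∧
    ∃ G : AddSubgroup L,
      AddSubgroup.comap nabla.toAddMonoidHom (perp G) = G ∧
      Nat.card G ^ 2 = Nat.card L := by
  classical
  have skew : ∀ x y : L, nabla x y = - nabla y x := by
    intro x y
    have h := hsymp (x + y)
    simp only [map_add, AddMonoidHom.add_apply, hsymp x, hsymp y] at h
    have : nabla x y + nabla y x = 0 := by
      rw [← h]; abel
    linear_combination (norm := abel) this
  let S : Set (AddSubgroup L) := {G | ∀ g ∈ G, ∀ h ∈ G, nabla g h = 0}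
  have hbot : (⊥ : AddSubgroup L) ∈ S := by
    intro g hg h hh
    rw [AddSubgroup.mem_bot] at hg
    simp [hg]
  obtain ⟨G, hGS, hGmax⟩ := Set.Finite.exists_maximalFor id S (Set.toFinite S) ⟨⊥, hbot⟩
  have hG : AddSubgroup.comap nabla.toAddMonoidHom (perp G) = G := by
    apply le_antisymm
    · intro x hx
      have hx' : ∀ g ∈ G, nabla x g = 0 := hx
      have hG'S : G ⊔ AddSubgroup.zmultiples x ∈ S := by
        intro a ha b hb
        obtain ⟨g, hg, a', ha', rfl⟩ := AddSubgroup.mem_sup.mp ha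
        obtain ⟨m, rfl⟩ := AddSubgroup.mem_zmultiples_iff.mp ha'
        obtain ⟨h, hh, b', hb', rfl⟩ := AddSubgroup.mem_sup.mp hb
        obtain ⟨l, rfl⟩ := AddSubgroup.mem_zmultiples_iff.mp hb'
        have e1 : nabla x h = 0 := hx' h hh
        have e2 : nabla g x = 0 := by rw [skew g x, hx' g hg, neg_zero]
        have e3 : nabla g h = 0 := hGS g hg h hh
        have e4 : nabla x x = 0 := hsymp x
        simp [map_add, map_zsmul, AddMonoidHom.add_apply, e1, e2, e3, e4]
      have heq : G = G ⊔ AddSubgroup.zmultiples x := le_antisymm le_sup_left (hGmax hG'S le_sup_left)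
      rw [heq]
      exact AddSubgroup.mem_sup_right (AddSubgroup.mem_zmultiples x)
    · intro g hg
      exact fun h hh => hGS g hg h hh
  -- cardinalities
  haveI : Finite (L →+ QZ) := Finite.of_equiv L nabla.toEquiv
  have cardPerp : Nat.card (perp G) = Nat.card G := by
    have h1 : AddSubgroup.comap nabla.toAddMonoidHom (perp G) =
        AddSubgroup.map nabla.symm.toAddMonoidHom (perp G) :=
      AddSubgroup.comap_equiv_eq_map_symm' nabla (perp G)
    have h2 : Nat.card (perp G) =
        Nat.card (AddSubgroup.map nabla.symm.toAddMonoidHom (perp G)) :=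
      Nat.card_congr
        ((perp G).equivMapOfInjective nabla.symm.toAddMonoidHom nabla.symm.injective).toEquiv
    rw [h2, ← h1, hG]
  let res : (L →+ QZ) →+ (↥G →+ QZ) :=
    { toFun := fun χ => χ.comp G.subtype, map_zero' := rfl, map_add' := fun _ _ => rfl }
  have hres : Function.Surjective res := by
    have hsurj := CharacterModule.dual_surjective_of_injective (R := ℤ)
      (G.subtype.toIntLinearMap) Subtype.coe_injective
    intro χ
    obtain ⟨ψ, hψ⟩ := hsurj χ
    exact ⟨ψ, hψ⟩
  haveI : Finite (↥G →+ QZ) := Finite.of_surjective res hres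
  have hker : res.ker = perp G := by
    ext χ
    constructor
    · intro h g hgG
      have h0 : res χ = 0 := AddMonoidHom.mem_ker.mp h
      have := congrArg (fun f : ↥G →+ QZ => f ⟨g, hgG⟩) h0
      simpa [res] using this
    · intro h
      rw [AddMonoidHom.mem_ker]
      ext g
      simpa [res] using h g.1 g.2
  have main : Nat.card (L →+ QZ) = Nat.card (↥G →+ QZ) * Nat.card res.ker := by
    rw [AddSubgroup.card_eq_card_quotient_mul_card_addSubgroup res.ker]
    congr 1
    exact Nat.card_congr (QuotientAddGroup.quotientKerEquivOfSurjective res hres).toEquiv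
  have hfin : Nat.card L = Nat.card G * Nat.card G := by
    rw [← card_dual L, main, hker, cardPerp, card_dual ↥G]
  exact ⟨⟨Nat.card G, hfin⟩, G, hG, by rw [sq, ← hfin]⟩
end

section
/- Let p be a prime, λ = (λ₁ ≥ ... ≥ λ_l) positive integers, and let α be an l × l integer matrix. Let L be the quotient of ℤ^{2l} by the column space of the block matrix ⎛p^λ −α; 0 p^λ⎞ (where p^λ = diag(p^{λ₁},...,p^{λ_l})). Then the minimal number of generators of the p-group L equals 2l − rank_{𝔽_p}(ᾱ), where ᾱ is the reduction of α modulo p. -/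
open Matrix

/-- The minimal number of generators of an abelian group. -/
noncomputable def minGenerators (M : Type*) [AddCommGroup M] : ℕ :=
  sInf {n : ℕ | ∃ S : Finset M, S.card = n ∧ AddSubgroup.closure (S : Set M) = ⊤}


open Matrix

/-- Nakayama-type lemma for `p`-torsion modules over ℤ. -/
lemma nak_aux {M : Type*} [AddCommGroup M] [Module ℤ M] (I : Ideal ℤ) (K : ℕ)
    (hK : I ^ K • (⊤ : Submodule ℤ M) = ⊥) {S : Submodule ℤ M}
    (h : S ⊔ I • ⊤ = ⊤) : S = ⊤ := by
  obtain rfl : ‹Module ℤ M› = AddCommGroup.toIntModule M := Subsingleton.elim _ _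
  have key : ∀ k, (⊤ : Submodule ℤ M) ≤ S ⊔ I ^ k • ⊤ := by
    intro k
    induction k with
    | zero => simp [Ideal.one_eq_top, Submodule.top_smul]
    | succ k ih =>
      refine le_trans ih ?_
      have : I ^ k • (⊤ : Submodule ℤ M) = I ^ k • (S ⊔ I • ⊤) := by rw [h]
      rw [this, Submodule.smul_sup]
      refine sup_le (le_sup_left) (sup_le ?_ ?_)
      · exact le_trans Submodule.smul_le_right le_sup_left
      · rw [← Submodule.smul_assoc, smul_eq_mul, ← pow_succ]
        exact le_sup_right
  have := key K
  rw [hK, sup_bot_eq] at this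
  exact top_le_iff.mp this

/-- ℤ-span equals `ZMod p`-span as sets. -/
lemma span_int_eq_span_zmod {p : ℕ} [NeZero p] {V : Type*} [AddCommGroup V]
    [Module (ZMod p) V] (s : Set V) :
    ∀ x : V, x ∈ Submodule.span ℤ s ↔ x ∈ Submodule.span (ZMod p) s := by
  intro x
  constructor
  · intro hx
    refine Submodule.span_induction (p := fun y _ => y ∈ Submodule.span (ZMod p) s)
      (fun y hy => Submodule.subset_span hy) (Submodule.zero_mem _)
      (fun _ _ _ _ h1 h2 => Submodule.add_mem _ h1 h2)
      (fun c y _ hy => by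
        show c • y ∈ Submodule.span (ZMod p) s
        rw [← Int.cast_smul_eq_zsmul (ZMod p)]
        exact Submodule.smul_mem _ _ hy) hx
  · intro hx
    refine Submodule.span_induction (p := fun y _ => y ∈ Submodule.span ℤ s)
      (fun y hy => Submodule.subset_span hy) (Submodule.zero_mem _)
      (fun _ _ _ _ h1 h2 => Submodule.add_mem _ h1 h2)
      (fun c y _ hy => by
        show c • y ∈ Submodule.span ℤ s
        have hc : ((c.val : ℤ) : ZMod p) = c := by
          simp [ZMod.natCast_val, ZMod.cast_id]
        have : c • y = (c.val : ℤ) • y := by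
          conv_lhs => rw [← hc]
          rw [Int.cast_smul_eq_zsmul (ZMod p) (c.val : ℤ) y]
        rw [this]
        exact Submodule.smul_mem _ _ hy) hx

lemma closure_eq_top_iff_span {M : Type*} [AddCommGroup M] (s : Set M) :
    AddSubgroup.closure s = ⊤ ↔ Submodule.span ℤ s = ⊤ := by
  rw [← Submodule.span_int_eq_addSubgroupClosure]
  constructor
  · intro h
    rw [Submodule.eq_top_iff']
    intro x
    have : x ∈ ((Submodule.span ℤ s).toAddSubgroup : Set M) := by rw [h]; trivial
    exact this
  · intro h; rw [h]; rfl

/-- The inclusion `(m → K) → (m ⊕ m' → K)` into the first component. -/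
def inlMap (K : Type*) [Semiring K] (m m' : Type*) : (m → K) →ₗ[K] (m ⊕ m' → K) where
  toFun x := Sum.elim x 0
  map_add' x y := by funext i; cases i <;> simp
  map_smul' c x := by funext i; cases i <;> simp

lemma inlMap_injective (K : Type*) [Semiring K] (m m' : Type*) :
    Function.Injective (inlMap K m m') := by
  intro x y h
  funext i
  exact congrFun h (Sum.inl i)

lemma rank_fromBlocks_zero {K : Type*} [CommRing K] {m : Type*} [Fintype m] [DecidableEq m]
    (B : Matrix m m K) :
    (Matrix.fromBlocks 0 B 0 0 : Matrix (m ⊕ m) (m ⊕ m) K).rank = B.rank := by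
  have hr : LinearMap.range (Matrix.fromBlocks 0 B 0 0 :
      Matrix (m ⊕ m) (m ⊕ m) K).mulVecLin =
      (LinearMap.range B.mulVecLin).map (inlMap K m m) := by
    ext x
    constructor
    · rintro ⟨v, rfl⟩
      refine ⟨B.mulVec (v ∘ Sum.inr), ⟨v ∘ Sum.inr, rfl⟩, ?_⟩
      show Sum.elim (B.mulVec (v ∘ Sum.inr)) 0 = _
      have hv : v = Sum.elim (v ∘ Sum.inl) (v ∘ Sum.inr) := by
        funext i; cases i <;> rfl
      rw [Matrix.mulVecLin_apply]
      conv_rhs => rw [hv]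
      rw [Matrix.fromBlocks_mulVec]
      simp
    · rintro ⟨y, ⟨w, rfl⟩, rfl⟩
      refine ⟨Sum.elim 0 w, ?_⟩
      rw [Matrix.mulVecLin_apply, Matrix.fromBlocks_mulVec]
      show _ = Sum.elim (B.mulVecLin w) 0
      simp
  rw [Matrix.rank, Matrix.rank, hr]
  exact ((Submodule.equivMapOfInjective _ (inlMap_injective K m m) _).finrank_eq).symm

lemma rank_neg' {K : Type*} [CommRing K] {m : Type*} [Fintype m] (B : Matrix m m K) :
    (-B).rank = B.rank := by
  have : LinearMap.range (-B).mulVecLin = LinearMap.range B.mulVecLin := by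
    ext x
    constructor
    · rintro ⟨v, rfl⟩
      exact ⟨-v, by simp [Matrix.mulVecLin_apply, Matrix.mulVec_neg, Matrix.neg_mulVec]⟩
    · rintro ⟨v, rfl⟩
      exact ⟨-v, by simp [Matrix.mulVecLin_apply, Matrix.mulVec_neg, Matrix.neg_mulVec]⟩
  rw [Matrix.rank, Matrix.rank, this]

noncomputable def redMap (p : ℕ) (n : Type*) : (n → ℤ) →ₗ[ℤ] (n → ZMod p) where
  toFun x i := (x i : ZMod p)
  map_add' x y := by funext i; push_cast; simp
  map_smul' c x := by
    funext i
    simp only [Pi.smul_apply, smul_eq_mul, RingHom.id_apply, Int.cast_mul]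
    rw [← Int.cast_smul_eq_zsmul (ZMod p) c ((x i : ZMod p)), smul_eq_mul]

section Setup

variable (p : ℕ) [Fact p.Prime] {n : Type*} [Fintype n] [DecidableEq n]
variable (A : Matrix n n ℤ)

/-- The map `ℤ^n/im A → 𝔽_p^n / im Ā`. -/
noncomputable def psiMap :
    ((n → ℤ) ⧸ LinearMap.range (Matrix.toLin' A)) →ₗ[ℤ]
      ((n → ZMod p) ⧸ LinearMap.range (A.map (Int.cast : ℤ → ZMod p)).mulVecLin) :=
  Submodule.liftQ _
    (((Submodule.mkQ _).restrictScalars ℤ).comp (redMap p n))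
    (by
      rintro x ⟨v, rfl⟩
      simp only [LinearMap.mem_ker, LinearMap.comp_apply, LinearMap.restrictScalars_apply]
      rw [Matrix.toLin'_apply]
      have : redMap p n (A.mulVec v) =
          (A.map (Int.cast : ℤ → ZMod p)).mulVec (redMap p n v) := by
        funext i
        exact RingHom.map_mulVec (Int.castRingHom (ZMod p)) A v i
      rw [this, Submodule.mkQ_apply, Submodule.Quotient.mk_eq_zero]
      exact ⟨redMap p n v, rfl⟩)

lemma psiMap_surjective [NeZero p] : Function.Surjective (psiMap p A) := by
  intro t
  obtain ⟨y, rfl⟩ := Submodule.mkQ_surjective _ t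
  have hred : Function.Surjective (redMap p n) := by
    intro v
    refine ⟨fun i => ((v i).val : ℤ), ?_⟩
    funext i
    show ((((v i).val : ℤ) : ZMod p)) = v i
    simp [ZMod.natCast_val, ZMod.cast_id]
  obtain ⟨x, rfl⟩ := hred y
  exact ⟨Submodule.Quotient.mk x, rfl⟩

lemma psiMap_ker (u : (n → ℤ) ⧸ LinearMap.range (Matrix.toLin' A))
    (hu : psiMap p A u = 0) :
    u ∈ (Ideal.span {(p : ℤ)}) • (⊤ : Submodule ℤ ((n → ℤ) ⧸ LinearMap.range (Matrix.toLin' A))) := by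
  obtain ⟨x, rfl⟩ := Submodule.mkQ_surjective _ u
  have hx : Submodule.Quotient.mk (p := LinearMap.range
      (A.map (Int.cast : ℤ → ZMod p)).mulVecLin) (redMap p n x) = 0 := hu
  rw [Submodule.Quotient.mk_eq_zero] at hx
  obtain ⟨vbar, hv⟩ := hx
  have hred : Function.Surjective (redMap p n) := by
    intro v
    refine ⟨fun i => ((v i).val : ℤ), ?_⟩
    funext i
    show ((((v i).val : ℤ) : ZMod p)) = v i
    simp [ZMod.natCast_val, ZMod.cast_id]
  obtain ⟨v, rfl⟩ := hred vbar
  have hcomm : redMap p n (A.mulVec v) =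
      (A.map (Int.cast : ℤ → ZMod p)).mulVec (redMap p n v) := by
    funext i
    exact RingHom.map_mulVec (Int.castRingHom (ZMod p)) A v i
  have hker : redMap p n (x - A.mulVec v) = 0 := by
    rw [map_sub, hcomm, Matrix.mulVecLin_apply] at *
    rw [hv]
    exact sub_self _
  -- x - A v is divisible by p
  have hdvd : ∃ z : n → ℤ, x - A.mulVec v = (p : ℤ) • z := by
    refine ⟨fun i => (x - A.mulVec v) i / p, ?_⟩
    funext i
    have hi : (((x - A.mulVec v) i : ℤ) : ZMod p) = 0 := congrFun hker i
    rw [ZMod.intCast_zmod_eq_zero_iff_dvd] at hi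
    simp only [Pi.smul_apply, smul_eq_mul]
    exact (Int.mul_ediv_cancel' hi).symm
  obtain ⟨z, hz⟩ := hdvd
  have hxz : x = A.mulVec v + (p : ℤ) • z := by rw [← hz]; ring
  have : (Submodule.Quotient.mk x : (n → ℤ) ⧸ LinearMap.range (Matrix.toLin' A)) =
      (p : ℤ) • Submodule.Quotient.mk z := by
    rw [hxz, Submodule.Quotient.mk_add]
    have : (Submodule.Quotient.mk (A.mulVec v) :
        (n → ℤ) ⧸ LinearMap.range (Matrix.toLin' A)) = 0 := by
      rw [Submodule.Quotient.mk_eq_zero]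
      exact ⟨v, Matrix.toLin'_apply A v⟩
    rw [this, zero_add, Submodule.Quotient.mk_smul]
  rw [Submodule.mkQ_apply, this]
  exact Submodule.smul_mem_smul (Ideal.mem_span_singleton_self _) Submodule.mem_top

lemma quot_ann (x : (n → ℤ) ⧸ LinearMap.range (Matrix.toLin' A)) :
    A.det • x = 0 := by
  obtain ⟨y, rfl⟩ := Submodule.mkQ_surjective _ x
  rw [Submodule.mkQ_apply, ← Submodule.Quotient.mk_smul, Submodule.Quotient.mk_eq_zero]
  refine ⟨(A.adjugate).mulVec y, ?_⟩
  rw [Matrix.toLin'_apply, Matrix.mulVec_mulVec, Matrix.mul_adjugate,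
    Matrix.smul_mulVec, Matrix.one_mulVec]

end Setup
/-- Let `L` be the quotient of `ℤ^{2l}` by the column space of the block matrix
`(p^λ, −α; 0, p^λ)`.  Then the minimal number of generators of the `p`-group `L`
equals `2l − rank_{𝔽_p}(ᾱ)`, where `ᾱ` is the reduction of `α` mod `p`. -/
theorem statement18 (p : ℕ) (hp : p.Prime) (l : ℕ)
    (lam : Fin l → ℕ) (hpos : ∀ i, 0 < lam i)
    (hmono : ∀ i j : Fin l, i ≤ j → lam j ≤ lam i)
    (α : Matrix (Fin l) (Fin l) ℤ) :
    minGenerators ((Fin l ⊕ Fin l → ℤ) ⧸ LinearMap.range (Matrix.toLin'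
        (Matrix.fromBlocks (Matrix.diagonal fun i => (p : ℤ) ^ lam i) (-α) 0
          (Matrix.diagonal fun i => (p : ℤ) ^ lam i)))) =
      2 * l - (α.map (Int.cast : ℤ → ZMod p)).rank := by
  haveI : Fact p.Prime := ⟨hp⟩
  haveI : NeZero p := ⟨hp.ne_zero⟩
  set A : Matrix (Fin l ⊕ Fin l) (Fin l ⊕ Fin l) ℤ :=
    Matrix.fromBlocks (Matrix.diagonal fun i => (p : ℤ) ^ lam i) (-α) 0
      (Matrix.diagonal fun i => (p : ℤ) ^ lam i) with hA
  set R : Submodule ℤ (Fin l ⊕ Fin l → ℤ) := LinearMap.range (Matrix.toLin' A) with hR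
  -- the reduction of `A` mod `p`
  have hAbar : A.map (Int.cast : ℤ → ZMod p) =
      Matrix.fromBlocks 0 (-(α.map (Int.cast : ℤ → ZMod p))) 0 0 := by
    rw [hA, Matrix.fromBlocks_map]
    have h1 : (Matrix.diagonal fun i => (p : ℤ) ^ lam i).map (Int.cast : ℤ → ZMod p) = 0 := by
      rw [Matrix.diagonal_map Int.cast_zero]
      have : (fun i => (((p : ℤ) ^ lam i : ℤ) : ZMod p)) = fun _ => (0 : ZMod p) := by
        funext i
        push_cast
        rw [ZMod.natCast_self, zero_pow (hpos i).ne']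
      rw [this, Matrix.diagonal_zero]
    have h2 : (-α).map (Int.cast : ℤ → ZMod p) = -(α.map (Int.cast : ℤ → ZMod p)) := by
      ext i j; simp
    have h3 : (0 : Matrix (Fin l) (Fin l) ℤ).map (Int.cast : ℤ → ZMod p) = 0 := by
      ext i j; simp
    rw [h1, h2, h3]
  have hdet : A.det = (p : ℤ) ^ (2 * ∑ i, lam i) := by
    rw [hA, Matrix.det_fromBlocks_zero₂₁, Matrix.det_diagonal, Finset.prod_pow_eq_pow_sum]
    ring
  set L := (Fin l ⊕ Fin l → ℤ) ⧸ R with hL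
  set W : Submodule (ZMod p) (Fin l ⊕ Fin l → ZMod p) :=
    LinearMap.range (A.map (Int.cast : ℤ → ZMod p)).mulVecLin with hW
  set T := (Fin l ⊕ Fin l → ZMod p) ⧸ W with hT
  set ψ : L →ₗ[ℤ] T := psiMap p A with hψ
  have hψsurj : Function.Surjective ψ := psiMap_surjective p A
  set I : Ideal ℤ := Ideal.span {(p : ℤ)} with hI
  -- annihilation
  have hKtop : I ^ (2 * ∑ i, lam i) • (⊤ : Submodule ℤ L) = ⊥ := by
    refine le_antisymm ?_ bot_le
    rw [hI, Ideal.span_singleton_pow]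
    refine Submodule.smul_le.mpr ?_
    intro r hr u _
    rw [Ideal.mem_span_singleton'] at hr
    obtain ⟨c, rfl⟩ := hr
    rw [mul_smul, ← hdet, quot_ann A u, smul_zero]
    exact Submodule.zero_mem ⊥
  -- kernel of ψ
  have hker : LinearMap.ker ψ ≤ I • (⊤ : Submodule ℤ L) := by
    intro u hu
    exact psiMap_ker p A u (LinearMap.mem_ker.mp hu)
  -- dimension of T
  have hWrank : Module.finrank (ZMod p) W = (α.map (Int.cast : ℤ → ZMod p)).rank := by
    have : Module.finrank (ZMod p) W = (A.map (Int.cast : ℤ → ZMod p)).rank := rfl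
    rw [this, hAbar, rank_fromBlocks_zero, rank_neg']
  have hrankle : (α.map (Int.cast : ℤ → ZMod p)).rank ≤ l := by
    have := Matrix.rank_le_card_width (α.map (Int.cast : ℤ → ZMod p))
    simpa using this
  have hTrank : Module.finrank (ZMod p) T = 2 * l - (α.map (Int.cast : ℤ → ZMod p)).rank := by
    have h1 := Submodule.finrank_quotient_add_finrank W
    have h2 : Module.finrank (ZMod p) (Fin l ⊕ Fin l → ZMod p) = 2 * l := by
      rw [Module.finrank_pi]
      simp [Fintype.card_sum]
      ring
    rw [h2, hWrank] at h1
    exact Nat.eq_sub_of_add_eq h1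
  -- lower bound
  have hlb : ∀ S : Finset L, AddSubgroup.closure (S : Set L) = ⊤ →
      2 * l - (α.map (Int.cast : ℤ → ZMod p)).rank ≤ S.card := by
    intro S hS
    have hspan : Submodule.span ℤ (S : Set L) = ⊤ := (closure_eq_top_iff_span _).mp hS
    have hmap : Submodule.span ℤ (ψ '' (S : Set L)) = ⊤ := by
      rw [← Submodule.map_span, hspan, Submodule.map_top, LinearMap.range_eq_top.mpr hψsurj]
    have hspan2 : Submodule.span (ZMod p) (ψ '' (S : Set L)) = ⊤ :=
      Submodule.eq_top_iff'.mpr fun x =>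
        (span_int_eq_span_zmod _ x).mp (by rw [hmap]; trivial)
    have hv : Submodule.span (ZMod p)
        (Set.range (fun s : {x // x ∈ S} => ψ (s : L))) = ⊤ := by
      have : Set.range (fun s : {x // x ∈ S} => ψ (s : L)) = ψ '' (S : Set L) := by
        ext x
        simp
      rw [this, hspan2]
    have hle := finrank_le_of_span_eq_top hv
    rw [Fintype.card_coe] at hle
    rw [← hTrank]
    exact hle
  -- existence of a generating set of the right size
  have hmem : ∃ S : Finset L, S.card = 2 * l - (α.map (Int.cast : ℤ → ZMod p)).rank ∧
      AddSubgroup.closure (S : Set L) = ⊤ := by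
    classical
    set b := Module.finBasis (ZMod p) T with hb
    choose g hg using fun i => hψsurj (b i)
    have hginj : Function.Injective g := by
      intro i j h
      apply b.injective
      rw [← hg i, ← hg j, h]
    refine ⟨Finset.image g Finset.univ, ?_, ?_⟩
    · rw [Finset.card_image_of_injective _ hginj, Finset.card_univ, Fintype.card_fin, hTrank]
    · rw [closure_eq_top_iff_span]
      have hcoe : ((Finset.image g Finset.univ : Finset L) : Set L) = Set.range g := by
        simp
      rw [hcoe]
      refine nak_aux I (2 * ∑ i, lam i) hKtop ?_
      have himg : ψ '' Set.range g = Set.range ⇑b := by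
        rw [← Set.range_comp]
        exact congrArg _ (funext fun i => hg i)
      have hbspan : Submodule.span ℤ (Set.range b) = ⊤ :=
        Submodule.eq_top_iff'.mpr fun x =>
          (span_int_eq_span_zmod _ x).mpr (by rw [b.span_eq]; trivial)
      have h1 : Submodule.map ψ (Submodule.span ℤ (Set.range g)) = ⊤ := by
        rw [Submodule.map_span, himg, hbspan]
      have h2 := Submodule.comap_map_eq ψ (Submodule.span ℤ (Set.range g))
      rw [h1, Submodule.comap_top] at h2
      exact le_antisymm le_top (le_trans (le_of_eq h2) (sup_le_sup_left hker _))
  -- conclusion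
  obtain ⟨S₀, hS₀card, hS₀cl⟩ := hmem
  have hmem' : 2 * l - (α.map (Int.cast : ℤ → ZMod p)).rank ∈
      {n : ℕ | ∃ S : Finset L, S.card = n ∧ AddSubgroup.closure (S : Set L) = ⊤} :=
    ⟨S₀, hS₀card, hS₀cl⟩
  rw [minGenerators]
  refine le_antisymm (Nat.sInf_le hmem') ?_
  obtain ⟨S₁, hS₁card, hS₁cl⟩ := Nat.sInf_mem (⟨_, hmem'⟩ : Set.Nonempty _)
  rw [← hS₁card]
  exact hlb S₁ hS₁cl
end
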